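/- There is no differentiable function g : (0, +∞) → ℝ with g(s) > 0 and g'(s) > 0 for all s > 0 satisfying g'(s)/((g(s) + 1)·g(s)) = 1/s for all s > 0, such that g extends the profile of a smooth metric on ℂⁿ, i.e., with lim_{s→0⁺} g(s) = 0. -/

import Mathlib

theorem stmt_11 :
    ¬ ∃ g : ℝ → ℝ,
      (∀ s, 0 < s → DifferentiableAt ℝ g s) ∧
      (∀ s, 0 < s → 0 < g s) ∧
      (∀ s, 0 < s → 0 < deriv g s) ∧
      (∀ s, 0 < s → deriv g s / ((g s + 1) * g s) = 1 / s) ∧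
      Filter.Tendsto g (nhdsWithin 0 (Set.Ioi 0)) (nhds 0) := by
  rintro ⟨g, hdiff, hpos, _hdp, heq, _hlim⟩
  set f : ℝ → ℝ := fun s => g s / (g s + 1) * s⁻¹ with hf
  have key : ∀ s ∈ Set.Ioi (0:ℝ), HasDerivAt f 0 s := by
    intro s hs
    have hs0 : (0:ℝ) < s := hs
    have hg := hpos s hs0
    have hg1 : g s + 1 ≠ 0 := by positivity
    have hd : deriv g s = (g s + 1) * g s / s := by
      have h := heq s hs0
      have hne : (g s + 1) * g s ≠ 0 := by positivity
      field_simp at h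
      field_simp
      linarith
    have hg' : HasDerivAt g ((g s + 1) * g s / s) s := hd ▸ (hdiff s hs0).hasDerivAt
    have h1 : HasDerivAt (fun x => g x / (g x + 1))
        ((((g s + 1) * g s / s) * (g s + 1) - g s * ((g s + 1) * g s / s)) / (g s + 1) ^ 2) s :=
      hg'.div (hg'.add_const 1) hg1
    have h2 : HasDerivAt (fun x : ℝ => x⁻¹) (-(s ^ 2)⁻¹) s := hasDerivAt_inv hs0.ne'
    have h3 : HasDerivAt (fun x => g x / (g x + 1) * x⁻¹)
        ((((g s + 1) * g s / s) * (g s + 1) - g s * ((g s + 1) * g s / s)) / (g s + 1) ^ 2 * s⁻¹ +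
          g s / (g s + 1) * -(s ^ 2)⁻¹) s := h1.mul h2
    convert h3 using 1
    field_simp
    ring
  have hderiv0 : ∀ s ∈ interior (Set.Ioi (0:ℝ)), deriv f s = 0 := by
    intro s hs
    rw [interior_Ioi] at hs
    exact (key s hs).deriv
  have hdiffOn : DifferentiableOn ℝ f (Set.Ioi 0) := fun s hs =>
    (key s hs).differentiableAt.differentiableWithinAt
  have hcont : ContinuousOn f (Set.Ioi 0) := hdiffOn.continuousOn
  have hmono : MonotoneOn f (Set.Ioi 0) :=
    monotoneOn_of_deriv_nonneg (convex_Ioi 0) hcont (by rwa [interior_Ioi])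
      (fun s hs => (hderiv0 s hs).ge)
  have hanti : AntitoneOn f (Set.Ioi 0) :=
    antitoneOn_of_deriv_nonpos (convex_Ioi 0) hcont (by rwa [interior_Ioi])
      (fun s hs => (hderiv0 s hs).le)
  have hconst : ∀ s ∈ Set.Ioi (0:ℝ), f s = f 1 := by
    intro s hs
    rcases le_total s 1 with h | h
    · exact le_antisymm (hmono hs (by norm_num) h) (hanti hs (by norm_num) h)
    · exact le_antisymm (hanti (by norm_num) hs h) (hmono (by norm_num) hs h)
  set C : ℝ := f 1 with hC
  have hg1pos := hpos 1 one_pos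
  have hCpos : 0 < C := by
    have : C = g 1 / (g 1 + 1) := by simp [hC, hf]
    rw [this]
    positivity
  have hs0 : (0:ℝ) < 2 / C := by positivity
  have h2 : f (2 / C) = C := hconst _ hs0
  have hgs := hpos _ hs0
  have hlt1 : g (2 / C) / (g (2 / C) + 1) < 1 := by
    rw [div_lt_one (by positivity)]; linarith
  have hCne : C ≠ 0 := hCpos.ne'
  have h2' : g (2 / C) / (g (2 / C) + 1) * (2 / C)⁻¹ = C := h2
  field_simp at h2'
  nlinarith [mul_pos hCpos (by linarith : (0:ℝ) < g (2 / C) + 2)]
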